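/- Let x₁, x₂ be Boolean independent in (A, φ) and g = a x₁x₂ + b x₂x₁ for complex a, b. Then the Boolean cumulants of g are: βₙ(g) = ab(β₂(x₁)β₁(x₂)² + β₂(x₂)β₁(x₁)²)(ab β₂(x₁)β₂(x₂))^{(n−2)/2} for n even, and βₙ(g) = (a+b) β₁(x₁)β₁(x₂) (ab β₂(x₁)β₂(x₂))^{(n−1)/2} for n odd. -/

import Mathlib

open Finset
open scoped Classical

/-- Partitions of `{1, ..., n}` (modelled as finpartitions of `Finset.univ : Finset (Fin n)`). -/
abbrev FP (n : ℕ) := Finpartition (Finset.univ : Finset (Fin n))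

/-- A partition is an interval partition if each of its blocks is an interval. -/
def IsIntervalPart {n : ℕ} (P : FP n) : Prop :=
  ∀ B ∈ P.parts, ∀ a b c : Fin n, a ∈ B → c ∈ B → a ≤ b → b ≤ c → b ∈ B

/-- The set `I(n)` of interval partitions of `[n]`. -/
noncomputable def intSet (n : ℕ) : Finset (FP n) := Finset.univ.filter IsIntervalPart

/-- The tuple `a` restricted to the block `B`, listed in increasing order of indices. -/
def blk {A : Type*} {n : ℕ} (a : Fin n → A) (B : Finset (Fin n)) : List A :=
  (B.sort (· ≤ ·)).map a

/-- `β` is the family of Boolean cumulant functionals of `φ`: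
`φ(a₁⋯aₙ) = ∑_{π ∈ I(n)} ∏_{V ∈ π} β((a₁,...,aₙ)|_V)`. -/
def IsBooleanCumulantFamily {A : Type*} [Ring A] [Algebra ℂ A]
    (φ : A →ₗ[ℂ] ℂ) (β : List A → ℂ) : Prop :=
  ∀ (n : ℕ) (a : Fin n → A), 0 < n →
    φ (List.ofFn a).prod = ∑ P ∈ intSet n, ∏ B ∈ P.parts, β (blk a B)

/-- `x₁, x₂` are Boolean independent in `(A, φ)`: `φ` factorizes over alternating
words from the non-unital subalgebras generated by `x₁` resp. `x₂`. -/
def BoolPair {A : Type*} [Ring A] [Algebra ℂ A] (φ : A →ₗ[ℂ] ℂ) (x₁ x₂ : A) : Prop :=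
  ∀ (n : ℕ) (y : Fin n → A) (idx : Fin n → Fin 2),
    (∀ (i : Fin n) (h : i.val + 1 < n), idx i ≠ idx ⟨i.val + 1, h⟩) →
    (∀ i, y i ∈ NonUnitalAlgebra.adjoin ℂ ({![x₁, x₂] (idx i)} : Set A)) →
    φ (List.ofFn y).prod = ∏ i, φ (y i)

namespace Aux14

/-- The block of a composition as a finset of `Fin n`. -/
def cPart {n : ℕ} (c : Composition n) (i : Fin c.length) : Finset (Fin n) :=
  Finset.univ.map (c.embedding i).toEmbedding

lemma mem_cPart {n : ℕ} (c : Composition n) (i : Fin c.length) (j : Fin n) :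
    j ∈ cPart c i ↔ c.index j = i := by
  rw [show (c.index j = i) ↔ (i = c.index j) from eq_comm, ← Composition.mem_range_embedding_iff']
  simp [cPart, Set.range, eq_comm]

lemma mem_cPart' {n : ℕ} (c : Composition n) (i : Fin c.length) (j : Fin n) :
    j ∈ cPart c i ↔ c.sizeUpTo i ≤ (j : ℕ) ∧ (j : ℕ) < c.sizeUpTo (i + 1) := by
  rw [← Composition.mem_range_embedding_iff]
  simp [cPart, Set.range, eq_comm]

lemma card_cPart {n : ℕ} (c : Composition n) (i : Fin c.length) :
    (cPart c i).card = c.blocksFun i := by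
  simp [cPart]

lemma cPart_nonempty {n : ℕ} (c : Composition n) (i : Fin c.length) :
    (cPart c i).Nonempty := by
  rw [← Finset.card_pos, card_cPart]
  exact c.one_le_blocksFun i

/-- The interval finpartition associated to a composition. -/
noncomputable def toFP {n : ℕ} (c : Composition n) : FP n where
  parts := Finset.univ.image (cPart c)
  supIndep := by
    rw [Finset.supIndep_iff_pairwiseDisjoint]
    rintro B hB C hC hne
    simp only [Finset.coe_image, Set.mem_image, Finset.mem_coe] at hB hC
    obtain ⟨i, -, rfl⟩ := hB
    obtain ⟨j, -, rfl⟩ := hC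
    have hij : i ≠ j := fun h => hne (by rw [h])
    simp only [Function.onFun, id]
    rw [Finset.disjoint_left]
    intro k hk hk'
    rw [mem_cPart] at hk hk'
    exact hij (hk ▸ hk')
  sup_parts := by
    ext j
    simp only [Finset.mem_sup, Finset.mem_image, Finset.mem_univ, iff_true, id]
    exact ⟨cPart c (c.index j), ⟨c.index j, by simp⟩, (mem_cPart _ _ _).2 rfl⟩
  bot_notMem := by
    simp only [Finset.bot_eq_empty, Finset.mem_image]
    rintro ⟨i, -, h⟩
    exact (cPart_nonempty c i).ne_empty h
    

lemma toFP_parts {n : ℕ} (c : Composition n) :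
    (toFP c).parts = Finset.univ.image (cPart c) := rfl

lemma toFP_isInterval {n : ℕ} (c : Composition n) : IsIntervalPart (toFP c) := by
  intro B hB a b d ha hd hab hbd
  simp only [toFP_parts, Finset.mem_image] at hB
  obtain ⟨i, -, rfl⟩ := hB
  rw [mem_cPart'] at ha hd ⊢
  exact ⟨le_trans ha.1 hab, lt_of_le_of_lt (Nat.le_of_succ_le_succ (Nat.succ_le_of_lt
    (Nat.lt_succ_of_le hbd))) hd.2⟩

end Aux14

namespace Aux14

lemma cPart_injective {n : ℕ} (c : Composition n) : Function.Injective (cPart c) := by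
  intro i j h
  obtain ⟨k, hk⟩ := cPart_nonempty c i
  have hk' : k ∈ cPart c j := h ▸ hk
  rw [mem_cPart] at hk hk'
  rw [← hk, ← hk']

lemma toFP_injective {n : ℕ} : Function.Injective (toFP (n := n)) := by
  intro c c' h
  have hparts : Finset.univ.image (cPart c) = Finset.univ.image (cPart c') := by
    have := congrArg Finpartition.parts h
    simpa [toFP_parts] using this
  -- the part containing any j coincides
  have hpart : ∀ j : Fin n, cPart c (c.index j) = cPart c' (c'.index j) := by
    intro j
    have h1 : cPart c (c.index j) ∈ Finset.univ.image (cPart c') := by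
      rw [← hparts]; exact Finset.mem_image_of_mem _ (Finset.mem_univ _)
    obtain ⟨i', -, hi'⟩ := Finset.mem_image.1 h1
    have hj : j ∈ cPart c' i' := by
      rw [hi']; exact (mem_cPart _ _ _).2 rfl
    rw [mem_cPart] at hj
    rw [← hi', hj]
  have hlen : c.length = c'.length := by
    have h1 : (Finset.univ.image (cPart c)).card = c.length := by
      rw [Finset.card_image_of_injective _ (cPart_injective c), Finset.card_univ,
        Fintype.card_fin]
    have h2 : (Finset.univ.image (cPart c')).card = c'.length := by
      rw [Finset.card_image_of_injective _ (cPart_injective c'), Finset.card_univ,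
        Fintype.card_fin]
    rw [← h1, hparts, h2]
  have hsize : ∀ k : ℕ, c.sizeUpTo k = c'.sizeUpTo k := by
    intro k
    induction k with
    | zero => simp
    | succ k ih =>
      by_cases hk : k < c.length
      · have hk' : k < c'.length := hlen ▸ hk
        rw [c.sizeUpTo_succ hk, c'.sizeUpTo_succ hk', ih]
        have hjlt : c.sizeUpTo k < n :=
          lt_of_lt_of_le (c.sizeUpTo_strict_mono hk) (c.sizeUpTo_le _)
        set j : Fin n := ⟨c.sizeUpTo k, hjlt⟩ with hj
        have hidx : c.index j = ⟨k, hk⟩ := by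
          have : j ∈ cPart c ⟨k, hk⟩ := by
            rw [mem_cPart']
            exact ⟨le_refl _, c.sizeUpTo_strict_mono hk⟩
          rw [mem_cPart] at this; exact this
        have hidx' : c'.index j = ⟨k, hk'⟩ := by
          have : j ∈ cPart c' ⟨k, hk'⟩ := by
            rw [mem_cPart']
            constructor
            · rw [← ih]
            · rw [hj]; show c.sizeUpTo k < c'.sizeUpTo (k+1)
              rw [ih]; exact c'.sizeUpTo_strict_mono hk'
          rw [mem_cPart] at this; exact this
        have hcard : (cPart c (c.index j)).card = (cPart c' (c'.index j)).card := by
          rw [hpart]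
        rw [hidx, hidx'] at hcard
        rw [card_cPart, card_cPart] at hcard
        simpa [Composition.blocksFun] using hcard
      · push_neg at hk
        have hk' : c'.length ≤ k := hlen ▸ hk
        rw [c.sizeUpTo_ofLength_le _ (le_trans hk (Nat.le_succ _)),
          c'.sizeUpTo_ofLength_le _ (le_trans hk' (Nat.le_succ _))]
  -- conclude blocks are equal
  have hblocks : c.blocks = c'.blocks := by
    apply List.ext_getElem
    · rw [c.blocks_length, c'.blocks_length, hlen]
    · intro i h1 h2
      have hi : i < c.length := by rwa [c.blocks_length] at h1
      have hi' : i < c'.length := by rwa [c'.blocks_length] at h2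
      have e1 : c.blocks[i] = c.blocksFun ⟨i, hi⟩ := rfl
      have e2 : c'.blocks[i] = c'.blocksFun ⟨i, hi'⟩ := rfl
      have f1 : c.sizeUpTo (i+1) = c.sizeUpTo i + c.blocksFun ⟨i, hi⟩ := c.sizeUpTo_succ hi
      have f2 : c'.sizeUpTo (i+1) = c'.sizeUpTo i + c'.blocksFun ⟨i, hi'⟩ := c'.sizeUpTo_succ hi'
      have g1 := hsize i
      have g2 := hsize (i+1)
      omega
  cases c; cases c'
  simpa using hblocks

end Aux14

namespace Aux14

def samePart {n : ℕ} (P : FP n) (j k : Fin n) : Prop := ∃ B ∈ P.parts, j ∈ B ∧ k ∈ B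

lemma exists_mem_part {n : ℕ} (P : FP n) (j : Fin n) : ∃ B ∈ P.parts, j ∈ B := by
  have : j ∈ P.parts.sup id := by rw [P.sup_parts]; exact Finset.mem_univ j
  rwa [Finset.mem_sup] at this

lemma part_eq_of_mem {n : ℕ} (P : FP n) {B C : Finset (Fin n)} (hB : B ∈ P.parts)
    (hC : C ∈ P.parts) {j : Fin n} (hjB : j ∈ B) (hjC : j ∈ C) : B = C := by
  by_contra h
  exact (Finset.disjoint_left.1 (P.disjoint hB hC h) hjB) hjC

noncomputable def cutMap {n : ℕ} (P : FP n) : Finset (Fin (n - 1)) :=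
  Finset.univ.filter (fun i =>
    ¬ samePart P ⟨i.1, by have := i.2; omega⟩ ⟨i.1 + 1, by have := i.2; omega⟩)

lemma adj_iff {n : ℕ} {P Q : FP n} (h : cutMap P = cutMap Q) {i : ℕ} (hi : i + 1 < n) :
    (samePart P ⟨i, by omega⟩ ⟨i + 1, hi⟩ ↔ samePart Q ⟨i, by omega⟩ ⟨i + 1, hi⟩) := by
  have hi' : i < n - 1 := by omega
  have := Finset.ext_iff.1 h ⟨i, hi'⟩
  simp only [cutMap, Finset.mem_filter, Finset.mem_univ, true_and] at this
  constructor
  · intro hs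
    by_contra hq
    exact (this.2 hq) hs
  · intro hs
    by_contra hp
    exact (this.1 hp) hs

lemma part_eq_Icc {n : ℕ} {P : FP n} (hP : IsIntervalPart P) {B : Finset (Fin n)}
    (hB : B ∈ P.parts) (hne : B.Nonempty) : B = Finset.Icc (B.min' hne) (B.max' hne) := by
  apply Finset.Subset.antisymm
  · intro j hj
    rw [Finset.mem_Icc]
    exact ⟨B.min'_le j hj, B.le_max' j hj⟩
  · intro j hj
    rw [Finset.mem_Icc] at hj
    exact hP B hB _ j _ (B.min'_mem hne) (B.max'_mem hne) hj.1 hj.2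

lemma parts_subset_of_cutMap_eq {n : ℕ} {P Q : FP n} (hP : IsIntervalPart P)
    (hQ : IsIntervalPart Q) (h : cutMap P = cutMap Q) : P.parts ⊆ Q.parts := by
  intro B hB
  have hne : B.Nonempty := Finset.nonempty_iff_ne_empty.2 (P.ne_bot hB)
  set m := B.min' hne with hm
  set M := B.max' hne with hM
  have hmB : m ∈ B := B.min'_mem hne
  have hMB : M ∈ B := B.max'_mem hne
  obtain ⟨C, hC, hmC⟩ := exists_mem_part Q m
  -- walk up: everything from m to M is in C
  have step : ∀ d : ℕ, ∀ _ : m.1 + d ≤ M.1,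
      (⟨m.1 + d, by have := M.2; omega⟩ : Fin n) ∈ C := by
    intro d
    induction d with
    | zero =>
      intro _
      have he : (⟨m.1 + 0, by have := M.2; omega⟩ : Fin n) = m := by ext; simp
      rw [he]; exact hmC
    | succ d ih =>
      intro hd
      have hd' : m.1 + d ≤ M.1 := by omega
      have hprev := ih hd'
      have hlt : m.1 + d + 1 < n := by have := M.2; omega
      have h1 : (⟨m.1 + d, by omega⟩ : Fin n) ∈ B :=
        hP B hB m _ M hmB hMB (by simp only [Fin.le_def, Fin.val_mk]; omega) (by simp only [Fin.le_def, Fin.val_mk]; omega)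
      have h2 : (⟨m.1 + d + 1, hlt⟩ : Fin n) ∈ B :=
        hP B hB m _ M hmB hMB (by simp only [Fin.le_def, Fin.val_mk]; omega) (by simp only [Fin.le_def, Fin.val_mk]; omega)
      have hsP : samePart P ⟨m.1 + d, by omega⟩ ⟨m.1 + d + 1, hlt⟩ := ⟨B, hB, h1, h2⟩
      have hsQ := (adj_iff h hlt).1 hsP
      obtain ⟨D, hD, hD1, hD2⟩ := hsQ
      have hDC : D = C := part_eq_of_mem Q hD hC hD1 hprev
      rw [hDC] at hD2
      exact hD2
  have hBC : B ⊆ C := by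
    intro j hj
    have hj1 : m.1 ≤ j.1 := Fin.le_def.1 (B.min'_le j hj)
    have hj2 : j.1 ≤ M.1 := Fin.le_def.1 (B.le_max' j hj)
    have := step (j.1 - m.1) (by omega)
    convert this using 2
    omega
  have hCB : C ⊆ B := by
    intro j hj
    rcases lt_or_ge j.1 m.1 with hlt | hge
    · -- contradiction with cut below m
      exfalso
      have hm1 : 1 ≤ m.1 := by omega
      have hmlt : m.1 - 1 + 1 < n := by have := m.2; omega
      have he : (⟨m.1 - 1 + 1, hmlt⟩ : Fin n) = m := by ext; simp; omega
      have hcut : ¬ samePart P ⟨m.1 - 1, by omega⟩ ⟨m.1 - 1 + 1, hmlt⟩ := by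
        rintro ⟨D, hD, hD1, hD2⟩
        rw [he] at hD2
        have hDB : D = B := part_eq_of_mem P hD hB hD2 hmB
        rw [hDB] at hD1
        have h5 : m.1 ≤ m.1 - 1 := Fin.le_def.1 (B.min'_le _ hD1)
        omega
      have hmem : (⟨m.1 - 1, by omega⟩ : Fin n) ∈ C := by
        apply hQ C hC j _ m hj hmC
        · simp only [Fin.le_def, Fin.val_mk]; omega
        · simp only [Fin.le_def, Fin.val_mk]; omega
      apply hcut
      apply (adj_iff h hmlt).2
      exact ⟨C, hC, hmem, by rw [he]; exact hmC⟩
    · rcases le_or_gt j.1 M.1 with hle | hgt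
      · exact hP B hB m j M hmB hMB (Fin.le_def.2 hge) (Fin.le_def.2 hle)
      · -- contradiction with cut above M
        exfalso
        have hlt2 : M.1 + 1 < n := by have := j.2; omega
        have hMC : M ∈ C := hBC hMB
        have he : (⟨M.1, by omega⟩ : Fin n) = M := by ext; simp
        have hcut : ¬ samePart P ⟨M.1, by omega⟩ ⟨M.1 + 1, hlt2⟩ := by
          rintro ⟨D, hD, hD1, hD2⟩
          rw [he] at hD1
          have hDB : D = B := part_eq_of_mem P hD hB hD1 hMB
          rw [hDB] at hD2
          have h5 : M.1 + 1 ≤ M.1 := Fin.le_def.1 (B.le_max' _ hD2)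
          omega
        have hmem : (⟨M.1 + 1, hlt2⟩ : Fin n) ∈ C := by
          apply hQ C hC M _ j hMC hj
          · simp only [Fin.le_def, Fin.val_mk]; omega
          · simp only [Fin.le_def, Fin.val_mk]; omega
        apply hcut
        apply (adj_iff h hlt2).2
        exact ⟨C, hC, by rw [he]; exact hMC, hmem⟩
  rw [Finset.Subset.antisymm hBC hCB]
  exact hC

lemma cutMap_injOn {n : ℕ} : Set.InjOn cutMap ((intSet n : Finset (FP n)) : Set (FP n)) := by
  intro P hP Q hQ h
  simp only [intSet, Finset.coe_filter, Set.mem_setOf_eq, Finset.mem_univ, true_and] at hP hQ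
  ext1
  exact Finset.Subset.antisymm (parts_subset_of_cutMap_eq hP hQ h)
    (parts_subset_of_cutMap_eq hQ hP h.symm)

end Aux14

namespace Aux14

lemma toFP_image_eq (n : ℕ) : Finset.univ.image (toFP (n := n)) = intSet n := by
  apply Finset.eq_of_subset_of_card_le
  · intro P hP
    obtain ⟨c, -, rfl⟩ := Finset.mem_image.1 hP
    simp only [intSet, Finset.mem_filter, Finset.mem_univ, true_and]
    exact toFP_isInterval c
  · calc (intSet n).card ≤ (Finset.univ : Finset (Finset (Fin (n - 1)))).card := by
          apply Finset.card_le_card_of_injOn cutMap (fun x _ => Finset.mem_univ _)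
          exact cutMap_injOn
       _ = 2 ^ (n - 1) := by rw [Finset.card_univ, Fintype.card_finset, Fintype.card_fin]
       _ = Fintype.card (Composition n) := (composition_card n).symm
       _ = (Finset.univ.image (toFP (n := n))).card := by
          rw [Finset.card_image_of_injective _ toFP_injective, Finset.card_univ]

/-- The sum over compositions. -/
noncomputable def Cc (f : ℕ → ℂ) (n : ℕ) : ℂ :=
  ∑ c : Composition n, (c.blocks.map f).prod

lemma prod_parts_toFP (n : ℕ) (f : ℕ → ℂ) (c : Composition n) :
    ∏ B ∈ (toFP c).parts, f B.card = (c.blocks.map f).prod := by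
  rw [toFP_parts, Finset.prod_image (fun i _ j _ h => cPart_injective c h)]
  rw [← Composition.ofFn_blocksFun, List.map_ofFn, List.prod_ofFn]
  apply Finset.prod_congr rfl
  intro i _
  rw [card_cPart]
  rfl

lemma sum_intSet_eq_Cc (n : ℕ) (f : ℕ → ℂ) :
    ∑ P ∈ intSet n, ∏ B ∈ P.parts, f B.card = Cc f n := by
  rw [← toFP_image_eq, Finset.sum_image (fun c _ c' _ h => toFP_injective h)]
  exact Finset.sum_congr rfl fun c _ => prod_parts_toFP n f c

lemma blocks_ne_nil {m : ℕ} (c : Composition (m + 1)) : c.blocks ≠ [] := by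
  intro h
  have := c.blocks_sum
  rw [h] at this
  simp at this

lemma Cc_zero (f : ℕ → ℂ) : Cc f 0 = 1 := by
  have h : ∀ c : Composition 0, (c.blocks.map f).prod = 1 := by
    intro c
    have hs := c.blocks_sum
    rcases hc : c.blocks with - | ⟨x, t⟩
    · simp
    · exfalso
      have hx : 0 < x := c.blocks_pos (by rw [hc]; exact List.mem_cons_self)
      rw [hc, List.sum_cons] at hs
      omega
  unfold Cc
  rw [Finset.sum_congr rfl (fun c _ => h c), Finset.sum_const, Finset.card_univ,
    composition_card]
  norm_num

def consC (n j : ℕ) (hj : j ≤ n) (c' : Composition (n - j)) : Composition (n + 1) :=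
  ⟨(j + 1) :: c'.blocks,
    fun hi => by
      rcases List.mem_cons.1 hi with h | h
      · omega
      · exact c'.blocks_pos h,
    by rw [List.sum_cons, c'.blocks_sum]; omega⟩

def tailC (n j : ℕ) (hj : j ≤ n) (c : Composition (n + 1))
    (hc : c.blocks.head! - 1 = j) : Composition (n - j) :=
  ⟨c.blocks.tail,
    fun hi => c.blocks_pos (List.mem_of_mem_tail hi),
    by
      have hne := blocks_ne_nil c
      have hd := List.cons_head!_tail hne
      have hpos : 0 < c.blocks.head! := c.blocks_pos (List.head!_mem_self hne)
      have hs := c.blocks_sum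
      rw [← hd, List.sum_cons] at hs
      omega⟩

lemma Cc_fiber (f : ℕ → ℂ) (n j : ℕ) (hj : j ≤ n) :
    ∑ c ∈ Finset.univ.filter (fun c : Composition (n + 1) => c.blocks.head! - 1 = j),
      (c.blocks.map f).prod = f (j + 1) * Cc f (n - j) := by
  unfold Cc
  rw [Finset.mul_sum]
  symm
  apply Finset.sum_bij' (i := fun (c' : Composition (n - j)) (_ : c' ∈ Finset.univ) =>
      consC n j hj c')
    (j := fun c hc => tailC n j hj c (by
      simpa only [Finset.mem_filter, Finset.mem_univ, true_and] using hc))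
  case hi =>
    intro c' _
    simp only [Finset.mem_filter, Finset.mem_univ, true_and, consC]
    simp
  case hj =>
    intro c hc
    exact Finset.mem_univ _
  case left_neg =>
    intro c' _
    apply Composition.ext
    rfl
  case right_neg =>
    intro c hc
    simp only [Finset.mem_filter, Finset.mem_univ, true_and] at hc
    apply Composition.ext
    show (j + 1) :: c.blocks.tail = c.blocks
    have hne := blocks_ne_nil c
    have hd := List.cons_head!_tail hne
    have hpos : 0 < c.blocks.head! := c.blocks_pos (List.head!_mem_self hne)
    rw [← hd]
    congr 1
    omega
  case h =>
    intro c' _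
    simp [consC, List.map_cons, List.prod_cons]

lemma Cc_succ (f : ℕ → ℂ) (n : ℕ) :
    Cc f (n + 1) = ∑ j ∈ Finset.range (n + 1), f (j + 1) * Cc f (n - j) := by
  unfold Cc
  rw [← Finset.sum_fiberwise_of_maps_to (g := fun c : Composition (n + 1) => c.blocks.head! - 1)
    (t := Finset.range (n + 1)) ?_]
  · apply Finset.sum_congr rfl
    intro j hj
    rw [Finset.mem_range] at hj
    exact Cc_fiber f n j (by omega)
  · intro c _
    rw [Finset.mem_range]
    show c.blocks.head! - 1 < n + 1
    have hne := blocks_ne_nil c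
    have hpos : 0 < c.blocks.head! := c.blocks_pos (List.head!_mem_self hne)
    have hle : c.blocks.head! ≤ n + 1 := by
      have hs := c.blocks_sum
      have hd := List.cons_head!_tail hne
      rw [← hd, List.sum_cons] at hs
      omega
    omega

end Aux14

namespace Aux14

noncomputable def trivFP (n : ℕ) (hn : 1 ≤ n) : FP n :=
  Finpartition.indiscrete (by
    simp only [Finset.bot_eq_empty, ne_eq, Finset.univ_eq_empty_iff, not_isEmpty_iff]
    exact ⟨⟨0, hn⟩⟩)

lemma trivFP_parts (n : ℕ) (hn : 1 ≤ n) : (trivFP n hn).parts = {Finset.univ} := rfl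

lemma trivFP_mem (n : ℕ) (hn : 1 ≤ n) : trivFP n hn ∈ intSet n := by
  simp only [intSet, Finset.mem_filter, Finset.mem_univ, true_and]
  intro B hB a b c _ _ _ _
  rw [trivFP_parts, Finset.mem_singleton] at hB
  subst hB
  exact Finset.mem_univ b

lemma card_lt_of_ne_triv {n : ℕ} (hn : 1 ≤ n) {P : FP n} (hP : P ≠ trivFP n hn)
    {B : Finset (Fin n)} (hB : B ∈ P.parts) : B.card < n := by
  by_contra hc
  push_neg at hc
  have hBu : B = Finset.univ := by
    apply Finset.eq_univ_of_card
    have := Finset.card_le_card (Finset.subset_univ B)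
    rw [Finset.card_univ, Fintype.card_fin] at this
    rw [Fintype.card_fin]
    omega
  apply hP
  ext1
  rw [trivFP_parts]
  apply Finset.Subset.antisymm
  · intro C hC
    rw [Finset.mem_singleton]
    by_contra hne
    have hdisj := P.disjoint (hBu ▸ hB) hC (fun h => hne h.symm)
    have hCne : C.Nonempty := Finset.nonempty_iff_ne_empty.2 (P.ne_bot hC)
    obtain ⟨x, hx⟩ := hCne
    exact (Finset.disjoint_right.1 hdisj hx) (Finset.mem_univ x)
  · intro C hC
    rw [Finset.mem_singleton] at hC
    subst hC
    have := hB
    rwa [hBu] at this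

lemma key_unique (F G : ℕ → ℂ)
    (h : ∀ n, 1 ≤ n → (∑ P ∈ intSet n, ∏ B ∈ P.parts, F B.card)
      = ∑ P ∈ intSet n, ∏ B ∈ P.parts, G B.card) :
    ∀ n, 1 ≤ n → F n = G n := by
  intro n
  induction n using Nat.strong_induction_on with
  | _ n ih =>
    intro hn
    have h1 := h n hn
    rw [← Finset.add_sum_erase _ _ (trivFP_mem n hn),
      ← Finset.add_sum_erase _ _ (trivFP_mem n hn)] at h1
    have h2 : (∑ P ∈ (intSet n).erase (trivFP n hn), ∏ B ∈ P.parts, F B.card)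
        = ∑ P ∈ (intSet n).erase (trivFP n hn), ∏ B ∈ P.parts, G B.card := by
      apply Finset.sum_congr rfl
      intro P hP
      have hPne : P ≠ trivFP n hn := (Finset.mem_erase.1 hP).1
      apply Finset.prod_congr rfl
      intro B hB
      have hlt : B.card < n := card_lt_of_ne_triv hn hPne hB
      have hge : 1 ≤ B.card := by
        rw [Nat.one_le_iff_ne_zero, ← Nat.pos_iff_ne_zero, Finset.card_pos]
        exact Finset.nonempty_iff_ne_empty.2 (P.ne_bot hB)
      exact ih B.card hlt hge
    rw [h2] at h1
    have h3 : (∏ B ∈ (trivFP n hn).parts, F B.card) = F n := by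
      rw [trivFP_parts, Finset.prod_singleton, Finset.card_univ, Fintype.card_fin]
    have h4 : (∏ B ∈ (trivFP n hn).parts, G B.card) = G n := by
      rw [trivFP_parts, Finset.prod_singleton, Finset.card_univ, Fintype.card_fin]
    rw [h3, h4] at h1
    exact add_right_cancel h1

end Aux14


namespace Aux14

lemma one_sub_ne (e : Fin 2) : 1 - e ≠ e := by fin_cases e <;> decide

variable {A : Type*} [Ring A] [Algebra ℂ A]

/-- The merged alternating letter list of the word indexed by `e :: rest`. -/
noncomputable def letters (X : Fin 2 → A) : Fin 2 → List (Fin 2) → List (A × Fin 2)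
  | e, [] => [(X e, e), (X (1 - e), 1 - e)]
  | e, r :: rest =>
    (X e, e) ::
      (if 1 - e = r then (X r * X r, r) :: (letters X r rest).tail
       else (X (1 - e), 1 - e) :: letters X r rest)

lemma letters_head (X : Fin 2 → A) (e : Fin 2) (rest : List (Fin 2)) :
    letters X e rest = (X e, e) :: (letters X e rest).tail := by
  cases rest <;> simp [letters]

lemma letters_prod (X : Fin 2 → A) :
    ∀ (rest : List (Fin 2)) (e : Fin 2),
      ((letters X e rest).map Prod.fst).prod
        = ((e :: rest).map (fun i => X i * X (1 - i))).prod := by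
  intro rest
  induction rest with
  | nil => intro e; simp [letters]
  | cons r rest ih =>
    intro e
    have hih := ih r
    rw [letters_head X r rest] at hih
    simp only [List.map_cons, List.prod_cons] at hih ⊢
    rw [letters]
    split_ifs with h
    · subst h
      simp only [List.map_cons, List.prod_cons]
      rw [mul_assoc (X (1 - e)) (X (1 - e)), hih]
      simp [mul_assoc]
    · simp only [List.map_cons, List.prod_cons]
      rw [ih r]
      simp [List.map_cons, List.prod_cons, mul_assoc]

lemma letters_chain (X : Fin 2 → A) :
    ∀ (rest : List (Fin 2)) (e : Fin 2),
      (letters X e rest).IsChain (fun p q => p.2 ≠ q.2) := by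
  intro rest
  induction rest with
  | nil =>
    intro e
    simp [letters, List.isChain_cons_cons]
    exact (one_sub_ne e).symm
  | cons r rest ih =>
    intro e
    have hih := ih r
    rw [letters_head X r rest] at hih
    rw [List.isChain_cons] at hih
    rw [letters]
    split_ifs with h
    · rw [List.isChain_cons_cons]
      constructor
      · show e ≠ r
        intro he
        exact one_sub_ne e (h.trans he.symm)
      · rw [List.isChain_cons]
        exact hih
    · rw [List.isChain_cons_cons]
      refine ⟨(one_sub_ne e).symm, ?_⟩
      rw [letters_head X r rest, List.isChain_cons_cons]
      refine ⟨?_, List.isChain_cons.2 hih⟩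
      show (1 - e) ≠ r
      exact h

lemma letters_mem (X : Fin 2 → A) :
    ∀ (rest : List (Fin 2)) (e : Fin 2),
      ∀ p ∈ letters X e rest, p.1 ∈ NonUnitalAlgebra.adjoin ℂ ({X p.2} : Set A) := by
  intro rest
  induction rest with
  | nil =>
    intro e p hp
    simp only [letters, List.mem_cons, List.mem_singleton] at hp
    rcases hp with rfl | rfl | h
    · exact NonUnitalAlgebra.self_mem_adjoin_singleton ℂ _
    · exact NonUnitalAlgebra.self_mem_adjoin_singleton ℂ _
    · exact absurd h List.not_mem_nil
  | cons r rest ih =>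
    intro e p hp
    rw [letters] at hp
    split_ifs at hp with h
    · rcases List.mem_cons.1 hp with rfl | hp'
      · exact NonUnitalAlgebra.self_mem_adjoin_singleton ℂ _
      · rcases List.mem_cons.1 hp' with rfl | hp''
        · exact mul_mem (NonUnitalAlgebra.self_mem_adjoin_singleton ℂ _)
            (NonUnitalAlgebra.self_mem_adjoin_singleton ℂ _)
        · exact ih r p (List.mem_of_mem_tail hp'')
    · rcases List.mem_cons.1 hp with rfl | hp'
      · exact NonUnitalAlgebra.self_mem_adjoin_singleton ℂ _
      · rcases List.mem_cons.1 hp' with rfl | hp''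
        · exact NonUnitalAlgebra.self_mem_adjoin_singleton ℂ _
        · exact ih r p hp''

end Aux14

namespace Aux14

set_option linter.unusedSectionVars false

variable {A : Type*} [Ring A] [Algebra ℂ A] (φ : A →ₗ[ℂ] ℂ) (x₁ x₂ : A)

lemma phi_prod_list (hbool : BoolPair φ x₁ x₂) (l : List (A × Fin 2))
    (hc : l.IsChain (fun p q => p.2 ≠ q.2))
    (hm : ∀ p ∈ l, p.1 ∈ NonUnitalAlgebra.adjoin ℂ ({![x₁, x₂] p.2} : Set A)) :
    φ ((l.map Prod.fst).prod) = (l.map (fun p => φ p.1)).prod := by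
  have key := hbool l.length (fun i => (l.get i).1) (fun i => (l.get i).2)
    (by
      intro i h
      have := List.isChain_iff_getElem.1 hc i.1 (by omega)
      exact this)
    (by intro i; exact hm _ (l.get_mem _))
  have h1 : List.ofFn (fun i => (l.get i).1) = l.map Prod.fst := by
    apply List.ext_getElem
    · simp
    · intro i h1 h2
      simp
  have h2 : (∏ i, φ ((l.get i).1)) = (l.map (fun p => φ p.1)).prod := by
    rw [← List.prod_ofFn]
    congr 1
    apply List.ext_getElem
    · simp
    · intro i h1 h2
      simp
  rw [h1, h2] at key
  exact key

/-- Scalar tail-value of a word. -/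
noncomputable def Hs (s t : Fin 2 → ℂ) : Fin 2 → List (Fin 2) → ℂ
  | e, [] => s (1 - e)
  | e, r :: rest => (if 1 - e = r then t r else s (1 - e) * s r) * Hs s t r rest

lemma letters_tail_val (X : Fin 2 → A) :
    ∀ (rest : List (Fin 2)) (e : Fin 2),
      ((letters X e rest).tail.map (fun p => φ p.1)).prod
        = Hs (fun i => φ (X i)) (fun i => φ (X i * X i)) e rest := by
  intro rest
  induction rest with
  | nil => intro e; simp [letters, Hs]
  | cons r rest ih =>
    intro e
    rw [letters]
    split_ifs with h
    · simp only [List.tail_cons, List.map_cons, List.prod_cons, Hs, if_pos h]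
      rw [ih r]
    · simp only [List.tail_cons, List.map_cons, List.prod_cons, Hs, if_neg h]
      rw [letters_head X r rest]
      simp only [List.map_cons, List.prod_cons]
      rw [ih r, mul_assoc]

lemma letters_val (X : Fin 2 → A) (rest : List (Fin 2)) (e : Fin 2) :
    ((letters X e rest).map (fun p => φ p.1)).prod
      = φ (X e) * Hs (fun i => φ (X i)) (fun i => φ (X i * X i)) e rest := by
  rw [letters_head X e rest]
  simp only [List.map_cons, List.prod_cons]
  rw [letters_tail_val]

lemma phi_word (hbool : BoolPair φ x₁ x₂) (rest : List (Fin 2)) (e : Fin 2) :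
    φ (((e :: rest).map (fun i => ![x₁, x₂] i * ![x₁, x₂] (1 - i))).prod)
      = φ (![x₁, x₂] e) *
        Hs (fun i => φ (![x₁, x₂] i)) (fun i => φ (![x₁, x₂] i * ![x₁, x₂] i)) e rest := by
  rw [← letters_prod, phi_prod_list φ x₁ x₂ hbool _ (letters_chain _ rest e)
    (letters_mem _ rest e), letters_val]

end Aux14

namespace Aux14

set_option linter.unusedSectionVars false

variable {A : Type*} [Ring A] [Algebra ℂ A] (φ : A →ₗ[ℂ] ℂ) (x₁ x₂ : A)

lemma sum_fin_succ_fn {M : Type*} [AddCommMonoid M] (n : ℕ) (F : (Fin (n + 1) → Fin 2) → M) :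
    ∑ ε : Fin (n + 1) → Fin 2, F ε = ∑ r : Fin 2, ∑ ε : Fin n → Fin 2, F (Fin.cons r ε) := by
  rw [← Equiv.sum_comp (Fin.consEquiv (fun _ : Fin (n + 1) => Fin 2)) F,
    Fintype.sum_prod_type]
  rfl

/-- The transfer sequence. -/
noncomputable def Kseq (s t cf : Fin 2 → ℂ) : Fin 2 → ℕ → ℂ
  | e, 0 => s (1 - e)
  | e, n + 1 => ∑ r : Fin 2,
      cf r * ((if 1 - e = r then t r else s (1 - e) * s r) * Kseq s t cf r n)

lemma K_eq (s t cf : Fin 2 → ℂ) : ∀ (n : ℕ) (e : Fin 2),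
    (∑ ε : Fin n → Fin 2, (∏ i, cf (ε i)) * Hs s t e (List.ofFn ε)) = Kseq s t cf e n := by
  intro n
  induction n with
  | zero =>
    intro e
    rw [show Kseq s t cf e 0 = s (1 - e) from rfl]
    have h : ∀ ε : Fin 0 → Fin 2, (∏ i, cf (ε i)) * Hs s t e (List.ofFn ε) = s (1 - e) := by
      intro ε
      rw [List.ofFn_zero]
      simp [Hs]
    rw [Finset.sum_congr rfl (fun ε _ => h ε), Finset.sum_const]
    norm_num
  | succ n ih =>
    intro e
    rw [show Kseq s t cf e (n + 1) = ∑ r : Fin 2,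
      cf r * ((if 1 - e = r then t r else s (1 - e) * s r) * Kseq s t cf r n) from rfl]
    rw [sum_fin_succ_fn n (fun ε => (∏ i, cf (ε i)) * Hs s t e (List.ofFn ε))]
    apply Finset.sum_congr rfl
    intro r _
    rw [← ih r, Finset.mul_sum, Finset.mul_sum]
    apply Finset.sum_congr rfl
    intro ε _
    beta_reduce
    have h1 : List.ofFn (Fin.cons r ε : Fin (n + 1) → Fin 2) = r :: List.ofFn ε := by
      rw [List.ofFn_succ]
      simp
    have h2 : (∏ i, cf ((Fin.cons r ε : Fin (n + 1) → Fin 2) i)) = cf r * ∏ i, cf (ε i) := by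
      rw [Fin.prod_univ_succ]
      simp
    rw [h1, h2]
    rw [show Hs s t e (r :: List.ofFn ε)
      = (if 1 - e = r then t r else s (1 - e) * s r) * Hs s t r (List.ofFn ε) from rfl]
    ring

lemma g_sum (a b : ℂ) (g : A) (hg : g = a • (x₁ * x₂) + b • (x₂ * x₁)) :
    g = ∑ r : Fin 2, ![a, b] r • (![x₁, x₂] r * ![x₁, x₂] (1 - r)) := by
  rw [Fin.sum_univ_two, hg]
  norm_num

lemma g_pow (a b : ℂ) (g : A) (hg : g = a • (x₁ * x₂) + b • (x₂ * x₁)) :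
    ∀ n : ℕ, g ^ (n + 1) = ∑ ε : Fin (n + 1) → Fin 2,
      (∏ i, ![a, b] (ε i)) •
        ((List.ofFn ε).map (fun i => ![x₁, x₂] i * ![x₁, x₂] (1 - i))).prod := by
  intro n
  induction n with
  | zero =>
    rw [pow_one]
    rw [sum_fin_succ_fn 0 (fun ε => (∏ i, ![a, b] (ε i)) •
        ((List.ofFn ε).map (fun i => ![x₁, x₂] i * ![x₁, x₂] (1 - i))).prod)]
    rw [g_sum x₁ x₂ a b g hg]
    apply Finset.sum_congr rfl
    intro r _
    have h : ∀ ε : Fin 0 → Fin 2, (fun ε : Fin 1 → Fin 2 => (∏ i, ![a, b] (ε i)) •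
        ((List.ofFn ε).map (fun i => ![x₁, x₂] i * ![x₁, x₂] (1 - i))).prod) (Fin.cons r ε)
        = ![a, b] r • (![x₁, x₂] r * ![x₁, x₂] (1 - r)) := by
      intro ε
      beta_reduce
      have h1 : List.ofFn (Fin.cons r ε : Fin 1 → Fin 2) = [r] := by
        rw [List.ofFn_succ]
        simp
      have h2 : (∏ i, (![a, b] : Fin 2 → ℂ) ((Fin.cons r ε : Fin 1 → Fin 2) i))
          = ![a, b] r := by
        rw [Fin.prod_univ_succ]
        simp
      rw [h1, h2]
      simp
    rw [Finset.sum_congr rfl (fun ε _ => h ε), Finset.sum_const]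
    norm_num
  | succ n ih =>
    rw [pow_succ', ih]
    rw [g_sum x₁ x₂ a b g hg, Finset.sum_mul_sum]
    rw [sum_fin_succ_fn (n + 1) (fun ε => (∏ i, ![a, b] (ε i)) •
        ((List.ofFn ε).map (fun i => ![x₁, x₂] i * ![x₁, x₂] (1 - i))).prod)]
    apply Finset.sum_congr rfl
    intro r _
    apply Finset.sum_congr rfl
    intro ε _
    beta_reduce
    rw [smul_mul_smul_comm]
    have h1 : List.ofFn (Fin.cons r ε : Fin (n + 2) → Fin 2) = r :: List.ofFn ε := by
      rw [List.ofFn_succ]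
      simp
    have h2 : (∏ i, (![a, b] : Fin 2 → ℂ) ((Fin.cons r ε : Fin (n + 2) → Fin 2) i))
        = ![a, b] r * ∏ i, ![a, b] (ε i) := by
      rw [Fin.prod_univ_succ]
      simp
    rw [h1, h2]
    simp only [List.map_cons, List.prod_cons]

lemma m_eq (hbool : BoolPair φ x₁ x₂) (a b : ℂ) (g : A)
    (hg : g = a • (x₁ * x₂) + b • (x₂ * x₁)) (n : ℕ) :
    φ (g ^ (n + 1)) = ∑ r : Fin 2, ![a, b] r * (φ (![x₁, x₂] r) *
      Kseq (fun i => φ (![x₁, x₂] i)) (fun i => φ (![x₁, x₂] i * ![x₁, x₂] i)) ![a, b] r n) := by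
  rw [g_pow x₁ x₂ a b g hg n, map_sum]
  simp only [LinearMap.map_smul, smul_eq_mul]
  rw [sum_fin_succ_fn n (fun ε => (∏ i, ![a, b] (ε i)) *
      φ ((List.ofFn ε).map (fun i => ![x₁, x₂] i * ![x₁, x₂] (1 - i))).prod)]
  apply Finset.sum_congr rfl
  intro r _
  rw [← K_eq, Finset.mul_sum, Finset.mul_sum]
  apply Finset.sum_congr rfl
  intro ε _
  beta_reduce
  have h1 : List.ofFn (Fin.cons r ε : Fin (n + 1) → Fin 2) = r :: List.ofFn ε := by
    rw [List.ofFn_succ]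
    simp
  have h2 : (∏ i, (![a, b] : Fin 2 → ℂ) ((Fin.cons r ε : Fin (n + 1) → Fin 2) i))
      = ![a, b] r * ∏ i, ![a, b] (ε i) := by
    rw [Fin.prod_univ_succ]
    simp
  rw [h1, h2, phi_word φ x₁ x₂ hbool]
  ring

end Aux14

namespace Aux14

lemma K_CH (s t : Fin 2 → ℂ) (a b : ℂ) (n : ℕ) (e : Fin 2) :
    Kseq s t ![a, b] e (n + 2)
      = ((a + b) * s 0 * s 1) * Kseq s t ![a, b] e (n + 1)
        + (a * b * (t 0 * t 1 - s 0 ^ 2 * s 1 ^ 2)) * Kseq s t ![a, b] e n := by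
  have h0 : ((1 : Fin 2) - 0) = 1 := rfl
  have h1 : ((1 : Fin 2) - 1) = 0 := rfl
  fin_cases e <;>
    simp only [Kseq, Fin.sum_univ_two, h0, h1, Matrix.cons_val_zero, Matrix.cons_val_one,
      Matrix.head_cons, Fin.isValue] <;>
    norm_num <;> ring

end Aux14



namespace Aux14

noncomputable def betaF (OO EE cc : ℂ) : ℕ → ℂ :=
  fun n => if n % 2 = 0 then EE * cc ^ (n / 2 - 1) else OO * cc ^ (n / 2)

lemma betaF_one (OO EE cc : ℂ) : betaF OO EE cc 1 = OO := by
  simp [betaF]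

lemma betaF_two (OO EE cc : ℂ) : betaF OO EE cc 2 = EE := by
  simp [betaF]

lemma betaF_shift (OO EE cc : ℂ) (n : ℕ) (hn : 1 ≤ n) :
    betaF OO EE cc (n + 2) = cc * betaF OO EE cc n := by
  unfold betaF
  by_cases h : n % 2 = 0
  · have h2 : (n + 2) % 2 = 0 := by omega
    rw [if_pos h, if_pos h2]
    have hd : (n + 2) / 2 - 1 = (n / 2 - 1) + 1 := by omega
    rw [hd, pow_succ]
    ring
  · have h2 : ¬ (n + 2) % 2 = 0 := by omega
    rw [if_neg h, if_neg h2]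
    have hd : (n + 2) / 2 = n / 2 + 1 := by omega
    rw [hd, pow_succ]
    ring

lemma Cc_one (f : ℕ → ℂ) : Cc f 1 = f 1 := by
  rw [Cc_succ]
  simp [Cc_zero]

lemma Cc_two (f : ℕ → ℂ) : Cc f 2 = f 1 * f 1 + f 2 := by
  rw [Cc_succ]
  rw [Finset.sum_range_succ, Finset.sum_range_one]
  simp [Cc_zero, Cc_one]

lemma N_rec (OO EE cc : ℂ) (n : ℕ) :
    Cc (betaF OO EE cc) (n + 3)
      = OO * Cc (betaF OO EE cc) (n + 2) + (cc + EE) * Cc (betaF OO EE cc) (n + 1) := by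
  set f := betaF OO EE cc with hf
  have h1 : Cc f (n + 3) = ∑ j ∈ Finset.range (n + 3), f (j + 1) * Cc f (n + 2 - j) :=
    Cc_succ f (n + 2)
  rw [h1, Finset.sum_range_succ', Finset.sum_range_succ']
  have e0 : f (0 + 1) * Cc f (n + 2 - 0) = OO * Cc f (n + 2) := by
    rw [hf, betaF_one]
    norm_num
  have e1 : f (0 + 1 + 1) * Cc f (n + 2 - (0 + 1)) = EE * Cc f (n + 1) := by
    rw [hf]
    norm_num [betaF_two]
  have e2 : ∑ i ∈ Finset.range (n + 1), f (i + 1 + 1 + 1) * Cc f (n + 2 - (i + 1 + 1))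
      = cc * Cc f (n + 1) := by
    have : ∀ i ∈ Finset.range (n + 1),
        f (i + 1 + 1 + 1) * Cc f (n + 2 - (i + 1 + 1))
          = cc * (f (i + 1) * Cc f (n - i)) := by
      intro i hi
      have hs : f (i + 1 + 2) = cc * f (i + 1) := betaF_shift OO EE cc (i + 1) (by omega)
      have hv : i + 1 + 1 + 1 = i + 1 + 2 := by omega
      have hw : n + 2 - (i + 1 + 1) = n - i := by omega
      rw [hv, hw, hs]
      ring
    rw [Finset.sum_congr rfl this, ← Finset.mul_sum, ← Cc_succ]
  rw [e0, e1, e2]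
  ring

end Aux14

/-- For Boolean independent `x₁, x₂` and `g = a x₁x₂ + b x₂x₁` (`a, b ∈ ℂ`), the
Boolean cumulants of `g` are:
`βₙ(g) = ab(β₂(x₁)β₁(x₂)² + β₂(x₂)β₁(x₁)²)(ab β₂(x₁)β₂(x₂))^{(n−2)/2}` for `n` even
and `βₙ(g) = (a+b) β₁(x₁)β₁(x₂) (ab β₂(x₁)β₂(x₂))^{(n−1)/2}` for `n` odd, where
`β₁(x) = φ(x)` and `β₂(x) = φ(x²) − φ(x)²`. -/
theorem stmt14 {A : Type*} [Ring A] [Algebra ℂ A]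
    (φ : A →ₗ[ℂ] ℂ) (hφ1 : φ 1 = 1)
    (x₁ x₂ : A) (hbool : BoolPair φ x₁ x₂)
    (βc : List A → ℂ) (hβ : IsBooleanCumulantFamily φ βc)
    (a b : ℂ) (g : A) (hg : g = a • (x₁ * x₂) + b • (x₂ * x₁)) :
    (∀ k : ℕ, 1 ≤ k →
      βc (List.replicate (2 * k) g)
        = a * b * ((φ (x₁ ^ 2) - (φ x₁) ^ 2) * (φ x₂) ^ 2
              + (φ (x₂ ^ 2) - (φ x₂) ^ 2) * (φ x₁) ^ 2) *
            (a * b * (φ (x₁ ^ 2) - (φ x₁) ^ 2) * (φ (x₂ ^ 2) - (φ x₂) ^ 2)) ^ (k - 1)) ∧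
    (∀ k : ℕ,
      βc (List.replicate (2 * k + 1) g)
        = (a + b) * φ x₁ * φ x₂ *
            (a * b * (φ (x₁ ^ 2) - (φ x₁) ^ 2) * (φ (x₂ ^ 2) - (φ x₂) ^ 2)) ^ k) := by
  classical
  set cc : ℂ := a * b * (φ (x₁ ^ 2) - (φ x₁) ^ 2) * (φ (x₂ ^ 2) - (φ x₂) ^ 2) with hcc
  set EE : ℂ := a * b * ((φ (x₁ ^ 2) - (φ x₁) ^ 2) * (φ x₂) ^ 2
      + (φ (x₂ ^ 2) - (φ x₂) ^ 2) * (φ x₁) ^ 2) with hEE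
  set OO : ℂ := (a + b) * φ x₁ * φ x₂ with hOO
  have hx0 : (![x₁, x₂] : Fin 2 → A) 0 = x₁ := rfl
  have hx1 : (![x₁, x₂] : Fin 2 → A) 1 = x₂ := rfl
  have hp1 : x₁ ^ 2 = x₁ * x₁ := sq x₁
  have hp2 : x₂ ^ 2 = x₂ * x₂ := sq x₂
  -- step 1: moments are given by the Boolean moment sequence of betaF
  have hm : ∀ n : ℕ, φ (g ^ (n + 1)) = Aux14.Cc (Aux14.betaF OO EE cc) (n + 1) := by
    intro n
    induction n using Nat.strong_induction_on with
    | _ n ih =>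
      rcases n with - | n
      · rw [Aux14.m_eq φ x₁ x₂ hbool a b g hg 0, Aux14.Cc_one, Aux14.betaF_one]
        simp only [Aux14.Kseq, Fin.sum_univ_two, hx0, hx1, Matrix.cons_val_zero,
          Matrix.cons_val_one, Matrix.head_cons, hOO]
        norm_num
        ring
      rcases n with - | m
      · rw [Aux14.m_eq φ x₁ x₂ hbool a b g hg 1, Aux14.Cc_two, Aux14.betaF_one,
          Aux14.betaF_two]
        simp only [Aux14.Kseq, Fin.sum_univ_two, hx0, hx1, Matrix.cons_val_zero,
          Matrix.cons_val_one, Matrix.head_cons, hOO, hEE, hp1, hp2]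
        norm_num
        ring
      · have r1 : φ (g ^ (m + 3)) = OO * φ (g ^ (m + 2)) + (cc + EE) * φ (g ^ (m + 1)) := by
          rw [Aux14.m_eq φ x₁ x₂ hbool a b g hg (m + 2),
            Aux14.m_eq φ x₁ x₂ hbool a b g hg (m + 1),
            Aux14.m_eq φ x₁ x₂ hbool a b g hg m]
          rw [Fin.sum_univ_two, Fin.sum_univ_two, Fin.sum_univ_two]
          rw [Aux14.K_CH, Aux14.K_CH]
          simp only [hx0, hx1, Matrix.cons_val_zero, Matrix.cons_val_one, Matrix.head_cons,
            hOO, hEE, hcc, hp1, hp2]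
          ring
        have e3 : m + 2 + 1 = m + 3 := rfl
        rw [e3, r1, ih (m + 1) (by omega), ih m (by omega), Aux14.N_rec]
  -- step 2: the Boolean cumulant relation for the constant tuple g
  have hphi : ∀ n : ℕ, 1 ≤ n → φ (g ^ n)
      = ∑ P ∈ intSet n, ∏ B ∈ P.parts, βc (List.replicate B.card g) := by
    intro n hn
    have h := hβ n (fun _ => g) hn
    rw [List.ofFn_const, List.prod_replicate] at h
    rw [h]
    apply Finset.sum_congr rfl
    intro P _
    apply Finset.prod_congr rfl
    intro B _
    congr 1
    show (List.map (fun _ => g) (B.sort (· ≤ ·))) = List.replicate B.card g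
    rw [List.map_const']
    congr 1
    exact Finset.length_sort _
  -- step 3: uniqueness
  have huniq : ∀ n, 1 ≤ n → βc (List.replicate n g) = Aux14.betaF OO EE cc n := by
    apply Aux14.key_unique
    intro n hn
    rw [← hphi n hn, Aux14.sum_intSet_eq_Cc]
    obtain ⟨m, rfl⟩ : ∃ m, n = m + 1 := ⟨n - 1, by omega⟩
    exact hm m
  constructor
  · intro k hk
    rw [huniq (2 * k) (by omega)]
    unfold Aux14.betaF
    rw [if_pos (by omega)]
    congr 2
    omega
  · intro k
    rw [huniq (2 * k + 1) (by omega)]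
    unfold Aux14.betaF
    rw [if_neg (by omega)]
    congr 2
    omega
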